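/- arXiv:1210.3790 — 4 statements merged into one kernel-verified Lean document; each statement's English description precedes it below -/
import Mathlib

section
/- Let G be a special 2-group. Then the map q : G/Z(G) → Z(G) given by q(xZ(G)) = x² is a well-defined quadratic map between F_2-vector spaces, and its polar map satisfies b_q(xZ(G), yZ(G)) = [x,y] = xyx⁻¹y⁻¹ for all x, y ∈ G. -/
/-- A finite `2`-group `G` is a special `2`-group if it is non-abelian and
`G' = Φ(G) = Z(G) = Ω(Z(G))`. -/
def IsSpecial2Group (G : Type*) [Group G] : Prop :=
  IsPGroup 2 G ∧ (∃ x y : G, x * y ≠ y * x) ∧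
    commutator G = frattini G ∧ frattini G = Subgroup.center G ∧
    Subgroup.center G = Subgroup.closure {x : G | x ∈ Subgroup.center G ∧ x ^ 2 = 1}

/-- For a special `2`-group `G`, squaring induces a well-defined quadratic map
`q : G/Z(G) → Z(G)`, `xZ(G) ↦ x²` (both groups being elementary abelian `2`-groups,
i.e. `F₂`-vector spaces), whose polar map is the commutator:
`b_q(xZ(G), yZ(G)) = xyx⁻¹y⁻¹`.  Written multiplicatively this says: squares are
central and again square to `1`, squaring is constant on cosets of the center, the
"polar map" `b_q(x,y) = q(xy)q(x)⁻¹q(y)⁻¹` equals the commutator `xyx⁻¹y⁻¹`, and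
the commutator map is bilinear. -/
theorem special2Group_squaring_quadraticMap
    (G : Type*) [Group G] [Finite G] (hG : IsSpecial2Group G) :
    (∀ x : G, x ^ 2 ∈ Subgroup.center G) ∧
    (∀ x : G, (x ^ 2) ^ 2 = 1) ∧
    (∀ x y : G, (x : G ⧸ Subgroup.center G) = (y : G ⧸ Subgroup.center G) →
      x ^ 2 = y ^ 2) ∧
    (∀ x y : G, (x * y) ^ 2 * (x ^ 2)⁻¹ * (y ^ 2)⁻¹ = x * y * x⁻¹ * y⁻¹) ∧
    (∀ x y z : G, (x * y) * z * (x * y)⁻¹ * z⁻¹ =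
      (x * z * x⁻¹ * z⁻¹) * (y * z * y⁻¹ * z⁻¹)) ∧
    (∀ x y z : G, x * (y * z) * x⁻¹ * (y * z)⁻¹ =
      (x * y * x⁻¹ * y⁻¹) * (x * z * x⁻¹ * z⁻¹)) := by
  obtain ⟨hp, -, hCF, hFZ, hZΩ⟩ := hG
  haveI : Fact (Nat.Prime 2) := ⟨Nat.prime_two⟩
  -- squares lie in every maximal subgroup, hence in the Frattini subgroup = center
  have hsq_frattini : ∀ x : G, x ^ 2 ∈ frattini G := by
    intro x
    have : ∀ M : Subgroup G, IsCoatom M → x ^ 2 ∈ M := by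
      intro M hM
      haveI : Group.IsNilpotent G := hp.isNilpotent
      haveI : M.Normal :=
        Subgroup.NormalizerCondition.normal_of_coatom M
          normalizerCondition_of_isNilpotent hM
      -- every subgroup of G ⧸ M is ⊥ or ⊤
      have hdich : ∀ H : Subgroup (G ⧸ M), H = ⊥ ∨ H = ⊤ := by
        intro H
        have hle : M ≤ H.comap (QuotientGroup.mk' M) := by
          intro m hm
          have h1 : (QuotientGroup.mk' M) m = 1 := (QuotientGroup.eq_one_iff m).mpr hm
          rw [Subgroup.mem_comap, h1]
          exact H.one_mem
        rcases lt_or_eq_of_le hle with hlt | heq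
        · right
          have := hM.2 _ hlt
          have hmap := congrArg (Subgroup.map (QuotientGroup.mk' M)) this
          rwa [Subgroup.map_comap_eq_self_of_surjective
            (QuotientGroup.mk'_surjective M), Subgroup.map_top_of_surjective _
            (QuotientGroup.mk'_surjective M)] at hmap
        · left
          have hmap := congrArg (Subgroup.map (QuotientGroup.mk' M)) heq.symm
          rw [Subgroup.map_comap_eq_self_of_surjective
            (QuotientGroup.mk'_surjective M)] at hmap
          rw [hmap]
          ext g
          simp only [Subgroup.mem_map, Subgroup.mem_bot]
          constructor
          · rintro ⟨m, hm, rfl⟩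
            exact (QuotientGroup.eq_one_iff m).mpr hm
          · rintro rfl
            exact ⟨1, M.one_mem, rfl⟩
      -- in G ⧸ M every element squares to 1
      have hsq1 : ∀ a : G ⧸ M, a ^ 2 = 1 := by
        intro a
        by_contra hne
        have hzp : Subgroup.zpowers (a ^ 2) = ⊤ := by
          rcases hdich (Subgroup.zpowers (a ^ 2)) with h | h
          · exact absurd (h ▸ Subgroup.mem_zpowers (a ^ 2)) (by simp [hne])
          · exact h
        have ha : a ∈ Subgroup.zpowers (a ^ 2) := hzp ▸ Subgroup.mem_top a
        obtain ⟨m, hm⟩ := ha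
        have hm' : (a ^ 2) ^ m = a := hm
        -- a = (a^2)^m, so a^(2m-1) = 1, odd order divides power of 2
        have h2m : a ^ (2 * m) = a := by
          rw [zpow_mul, show ((2 : ℤ)) = ((2 : ℕ) : ℤ) by norm_num, zpow_natCast]
          exact hm'
        have hodd : a ^ (2 * m - 1) = 1 := by
          rw [zpow_sub, h2m, zpow_one, mul_inv_cancel]
        have hpq : IsPGroup 2 (G ⧸ M) := hp.to_quotient M
        obtain ⟨k, hk⟩ := hpq a
        have horder : orderOf a ∣ 2 ^ k := orderOf_dvd_of_pow_eq_one hk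
        have h1 : (orderOf a : ℤ) ∣ (2 * m - 1) := orderOf_dvd_iff_zpow_eq_one.mpr hodd
        have h1n : orderOf a ∣ (2 * m - 1).natAbs := by
          have := Int.natAbs_dvd_natAbs.mpr h1
          simpa using this
        have hoddZ : Odd (2 * m - 1) := by rw [Int.odd_iff]; omega
        have hodd' : Odd (2 * m - 1).natAbs := Int.natAbs_odd.mpr hoddZ
        have hdvd : orderOf a ∣ Nat.gcd (2 ^ k) (2 * m - 1).natAbs :=
          Nat.dvd_gcd horder h1n
        have hc2 : ¬ (2 ∣ (2 * m - 1).natAbs) := by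
          have := Nat.odd_iff.mp hodd'
          omega
        have hcop : Nat.Coprime (2 ^ k) (2 * m - 1).natAbs :=
          Nat.Coprime.pow_left _ ((Nat.prime_two.coprime_iff_not_dvd).mpr hc2)
        rw [Nat.Coprime] at hcop
        rw [hcop] at hdvd
        have ha1 : a = 1 := orderOf_eq_one_iff.mp (Nat.dvd_one.mp hdvd)
        exact hne (by rw [ha1, one_pow])
      have : ((x : G ⧸ M)) ^ 2 = 1 := hsq1 x
      rw [← QuotientGroup.mk_pow] at this
      exact (QuotientGroup.eq_one_iff _).mp this
    rw [frattini, Order.radical]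
    simp only [Subgroup.mem_iInf]
    exact fun M hM => this M hM
  have hsq_central : ∀ x : G, x ^ 2 ∈ Subgroup.center G := fun x => hFZ ▸ hsq_frattini x
  -- elements of the center square to 1
  have hcentral_sq : ∀ z : G, z ∈ Subgroup.center G → z ^ 2 = 1 := by
    intro z hz
    let H : Subgroup G :=
      { carrier := {x : G | x ∈ Subgroup.center G ∧ x ^ 2 = 1}
        one_mem' := ⟨Subgroup.one_mem _, one_pow 2⟩
        mul_mem' := by
          rintro a b ⟨ha, ha2⟩ ⟨hb, hb2⟩
          refine ⟨Subgroup.mul_mem _ ha hb, ?_⟩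
          have hab : Commute a b := (Subgroup.mem_center_iff.mp ha b).symm
          rw [hab.mul_pow, ha2, hb2, mul_one]
        inv_mem' := by
          rintro a ⟨ha, ha2⟩
          exact ⟨Subgroup.inv_mem _ ha, by rw [inv_pow, ha2, inv_one]⟩ }
    have hsub : Subgroup.closure {x : G | x ∈ Subgroup.center G ∧ x ^ 2 = 1} ≤ H :=
      Subgroup.closure_le H |>.mpr fun x hx => hx
    exact (hsub (hZΩ ▸ hz)).2
  -- commutators are central
  have hcomm_central : ∀ x y : G, x * y * x⁻¹ * y⁻¹ ∈ Subgroup.center G := by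
    intro x y
    have : (open scoped commutatorElement in ⁅x, y⁆) ∈ commutator G :=
      Subgroup.commutator_mem_commutator (Subgroup.mem_top x) (Subgroup.mem_top y)
    rw [hCF, hFZ] at this
    simpa [commutatorElement_def, mul_assoc] using this
  refine ⟨hsq_central, ?_, ?_, ?_, ?_, ?_⟩
  · exact fun x => hcentral_sq _ (hsq_central x)
  · -- constant on cosets of the center
    intro x y hxy
    have hzc : x⁻¹ * y ∈ Subgroup.center G := by
      rwa [QuotientGroup.eq] at hxy
    have hcom : Commute x (x⁻¹ * y) := Subgroup.mem_center_iff.mp hzc x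
    have hkey : (x * (x⁻¹ * y)) ^ 2 = x ^ 2 * (x⁻¹ * y) ^ 2 := hcom.mul_pow 2
    have hy : x * (x⁻¹ * y) = y := by group
    rw [hy] at hkey
    rw [hkey, hcentral_sq _ hzc, mul_one]
  · -- polar map equals commutator
    intro x y
    have h2 : y * (x * x) = x * x * y := by
      simpa [pow_two] using Subgroup.mem_center_iff.mp (hsq_central x) y
    have h4 : y * y * (x * x)⁻¹ = (x * x)⁻¹ * (y * y) := by
      simpa [pow_two] using
        Subgroup.mem_center_iff.mp
          (Subgroup.inv_mem _ (hsq_central x)) (y * y)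
    rw [pow_two, pow_two, pow_two]
    calc x * y * (x * y) * (x * x)⁻¹ * (y * y)⁻¹
        = (x * y * x⁻¹ * y⁻¹) * (y * (x * x) * y) * (x * x)⁻¹ * (y * y)⁻¹ := by
          group
      _ = (x * y * x⁻¹ * y⁻¹) * (x * x * y * y) * (x * x)⁻¹ * (y * y)⁻¹ := by
          rw [show y * (x * x) * y = (y * (x * x)) * y from rfl, h2]
      _ = (x * y * x⁻¹ * y⁻¹) * (x * x) * (y * y * (x * x)⁻¹) * (y * y)⁻¹ := by
          group
      _ = (x * y * x⁻¹ * y⁻¹) * (x * x) * ((x * x)⁻¹ * (y * y)) * (y * y)⁻¹ := by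
          rw [h4]
      _ = x * y * x⁻¹ * y⁻¹ := by group
  · -- bilinearity in first argument
    intro x y z
    have hyz := Subgroup.mem_center_iff.mp (hcomm_central y z)
    calc x * y * z * (x * y)⁻¹ * z⁻¹
        = x * (y * z * y⁻¹ * z⁻¹) * (z * x⁻¹ * z⁻¹) := by group
      _ = (y * z * y⁻¹ * z⁻¹) * x * (z * x⁻¹ * z⁻¹) := by rw [← hyz x]
      _ = (y * z * y⁻¹ * z⁻¹) * (x * z * x⁻¹ * z⁻¹) := by group
      _ = (x * z * x⁻¹ * z⁻¹) * (y * z * y⁻¹ * z⁻¹) := (hyz _).symm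
  · -- bilinearity in second argument
    intro x y z
    have hxz := Subgroup.mem_center_iff.mp (hcomm_central x z)
    calc x * (y * z) * x⁻¹ * (y * z)⁻¹
        = (x * y * x⁻¹ * y⁻¹) * (y * (x * z * x⁻¹ * z⁻¹) * y⁻¹) := by group
      _ = (x * y * x⁻¹ * y⁻¹) * (x * z * x⁻¹ * z⁻¹ * y * y⁻¹) := by rw [← hxz y]
      _ = (x * y * x⁻¹ * y⁻¹) * (x * z * x⁻¹ * z⁻¹) := by group
end

section
/- Let q : V → W be a quadratic map of F_2-vector spaces associated to a special 2-group G via the cocycle construction (G = V ×̇ W with multiplication (v,w)(v',w') = (v+v', c(v,v') + w + w'), where q(x) = c(x,x)). Then G is strongly real if and only if for every nonzero v ∈ V there exists a ∈ V with a ≠ v and q(a) = q(a − v) = 0. -/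
/-- Strong reality criterion for special `2`-groups: let `q : V → W` be a regular
quadratic map of finite-dimensional `F₂`-vector spaces whose polar form generates `W`,
arising as the diagonal of a normal `2`-cocycle `c`, and let `G` be the special
`2`-group on `V × W` with multiplication `(v,w)(v',w') = (v+v', c(v,v') + w + w')`.
Then `G` is strongly real (every element is a product of two elements of square one)
iff for every nonzero `v ∈ V` there is `a ∈ V` with `a ≠ v` and `q(a) = q(a - v) = 0`. -/
theorem special2Group_stronglyReal_iff
    (V W : Type*) [AddCommGroup V] [Module (ZMod 2) V] [Module.Finite (ZMod 2) V]
    [AddCommGroup W] [Module (ZMod 2) W] [Module.Finite (ZMod 2) W]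
    (c : V → V → W)
    (hcoc : ∀ v₁ v₂ v₃ : V,
      c v₂ v₃ - c (v₁ + v₂) v₃ + c v₁ (v₂ + v₃) - c v₁ v₂ = 0)
    (hnorm : ∀ v : V, c v 0 = 0 ∧ c 0 v = 0)
    (q : V → W) (hq : ∀ v, q v = c v v)
    (b : V → V → W) (hb : ∀ v w, b v w = q (v + w) - q v - q w)
    (hreg : ∀ v : V, (∀ u : V, b u v = 0) → v = 0)
    (hgen : Submodule.span (ZMod 2) {w : W | ∃ u v : V, w = b u v} = ⊤)
    (mul : V × W → V × W → V × W)
    (hmul : ∀ p p' : V × W, mul p p' = (p.1 + p'.1, c p.1 p'.1 + p.2 + p'.2)) :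
    (∀ p : V × W, ∃ y z : V × W, mul y y = (0, 0) ∧ mul z z = (0, 0) ∧ p = mul y z) ↔
      (∀ v : V, v ≠ 0 → ∃ a : V, a ≠ v ∧ q a = 0 ∧ q (a - v) = 0) := by

  have h2V : ∀ x : V, x + x = 0 := fun x => by
    have h := two_smul (ZMod 2) x
    rw [show (2 : ZMod 2) = 0 from rfl, zero_smul] at h
    exact h.symm
  have h2W : ∀ x : W, x + x = 0 := fun x => by
    have h := two_smul (ZMod 2) x
    rw [show (2 : ZMod 2) = 0 from rfl, zero_smul] at h
    exact h.symm
  have hnegV : ∀ x : V, -x = x := fun x => neg_eq_iff_add_eq_zero.2 (h2V x)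
  have hq0 : q 0 = 0 := by rw [hq]; exact (hnorm 0).1
  have hsq : ∀ y : V × W, mul y y = (0, 0) ↔ q y.1 = 0 := by
    intro y
    rw [hmul, Prod.mk.injEq]
    constructor
    · rintro ⟨h1, h2⟩
      rw [add_assoc, h2W, add_zero, ← hq] at h2
      exact h2
    · intro h
      exact ⟨h2V y.1, by rw [add_assoc, h2W, add_zero, ← hq, h]⟩
  constructor
  · intro h v hv
    obtain ⟨y, z, hy, hz, hp⟩ := h (v, 0)
    rw [hmul] at hp
    have hv1 : v = y.1 + z.1 := congrArg Prod.fst hp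
    have hqy := (hsq y).1 hy
    have hqz := (hsq z).1 hz
    by_cases hav : y.1 = v
    · exact ⟨0, fun h0 => hv h0.symm, hq0, by rw [zero_sub, hnegV, ← hav]; exact hqy⟩
    · refine ⟨y.1, hav, hqy, ?_⟩
      have : y.1 - v = z.1 := by
        rw [hv1, sub_add_eq_sub_sub, sub_self, zero_sub, hnegV]
      rw [this]; exact hqz
  · intro h p
    by_cases hv : p.1 = 0
    · refine ⟨(0, 0), (0, p.2), ?_, ?_, ?_⟩
      · rw [hsq]; exact hq0
      · rw [hsq]; exact hq0
      · rw [hmul]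
        refine Prod.ext ?_ ?_
        · simp [hv]
        · simp [(hnorm 0).2]
    · obtain ⟨a, hav, hqa, hqav⟩ := h p.1 hv
      have hsub : a - p.1 = a + p.1 := by rw [sub_eq_add_neg, hnegV]
      refine ⟨(a, 0), (a + p.1, c a (a + p.1) + p.2), ?_, ?_, ?_⟩
      · rw [hsq]; exact hqa
      · rw [hsq]; rw [← hsub]; exact hqav
      · rw [hmul]
        refine Prod.ext ?_ ?_
        · show p.1 = a + (a + p.1)
          rw [← add_assoc, h2V, zero_add]
        · show p.2 = c a (a + p.1) + 0 + (c a (a + p.1) + p.2)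
          rw [add_zero, ← add_assoc, h2W, zero_add]
end

section
/- The quadratic map q : F_2³ → F_2² given by q(x,y,z) = (x² + xy + y², xz) is isotropic (e.g. q(0,0,1) = (0,0)), but fails the strong reality criterion: for v = (1,1,1) there is no a ∈ F_2³ with q(a) = q(a − v) = (0,0). -/
/-- The quadratic map `q : F₂³ → F₂²`, `q(x,y,z) = (x² + xy + y², xz)`, is isotropic
(`q(0,0,1) = (0,0)`), yet fails the strong reality criterion: for `v = (1,1,1)` there
is no `a` with `q(a) = q(a - v) = (0,0)`. -/
theorem isotropic_but_not_stronglyReal_criterion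
    (q : ZMod 2 × ZMod 2 × ZMod 2 → ZMod 2 × ZMod 2)
    (hq : ∀ v : ZMod 2 × ZMod 2 × ZMod 2,
      q v = (v.1 ^ 2 + v.1 * v.2.1 + v.2.1 ^ 2, v.1 * v.2.2)) :
    ((0, 0, 1) : ZMod 2 × ZMod 2 × ZMod 2) ≠ 0 ∧ q (0, 0, 1) = (0, 0) ∧
      ¬ ∃ a : ZMod 2 × ZMod 2 × ZMod 2, q a = (0, 0) ∧ q (a - (1, 1, 1)) = (0, 0) := by
  refine ⟨by decide, by simp [hq], ?_⟩
  rintro ⟨a, h1, h2⟩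
  rw [hq] at h1 h2
  revert h1 h2
  obtain ⟨x, y, z⟩ := a
  revert x y z
  decide
end

section
/- Every extraspecial 2-group other than Q₈ is strongly real. In particular D₄ is strongly real, the central product Q₈ ∘ D₄ is strongly real, and Q₈ itself is not strongly real (its unique element of order 2 is central). -/
section helpers
variable {G : Type*} [Group G]

lemma comm_bilin_left' (g h k w : G) (h1 : h*k*h⁻¹ = w * k)
    (hc : ∀ u : G, u * w = w * u) :
    (g*h)*k*(g*h)⁻¹*k⁻¹ = (g*k*g⁻¹*k⁻¹) * w := by
  calc (g*h)*k*(g*h)⁻¹*k⁻¹ = g*(h*k*h⁻¹)*g⁻¹*k⁻¹ := by group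
    _ = g*(w * k)*g⁻¹*k⁻¹ := by rw [h1]
    _ = (g*w)*(k*g⁻¹*k⁻¹) := by group
    _ = (w*g)*(k*g⁻¹*k⁻¹) := by rw [hc g]
    _ = w * (g*k*g⁻¹*k⁻¹) := by group
    _ = (g*k*g⁻¹*k⁻¹) * w := (hc _).symm

lemma comm_bilin_left (g h k : G)
    (hc : ∀ u : G, u * (h*k*h⁻¹*k⁻¹) = (h*k*h⁻¹*k⁻¹) * u) :
    (g*h)*k*(g*h)⁻¹*k⁻¹ = (g*k*g⁻¹*k⁻¹) * (h*k*h⁻¹*k⁻¹) :=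
  comm_bilin_left' g h k _ (by group) hc

lemma sq_mul' (g h w : G) (h1 : h*g = w * (g*h))
    (hc : ∀ u : G, u * w = w * u) :
    (g*h)*(g*h) = w * ((g*g) * (h*h)) := by
  calc (g*h)*(g*h) = g*(h*g)*h := by group
    _ = g*(w * (g*h))*h := by rw [h1]
    _ = (g*w)*(g*h*h) := by group
    _ = (w*g)*(g*h*h) := by rw [hc g]
    _ = w * ((g*g) * (h*h)) := by group

lemma sq_mul (g h : G)
    (hc : ∀ u : G, u * (h*g*h⁻¹*g⁻¹) = (h*g*h⁻¹*g⁻¹) * u) :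
    (g*h)*(g*h) = (h*g*h⁻¹*g⁻¹) * ((g*g) * (h*h)) :=
  sq_mul' g h _ (by group) hc

lemma hc1_iff (g h : G) : g*h*g⁻¹*h⁻¹ = 1 ↔ g*h = h*g := by
  constructor
  · intro hh
    have h' : (g*h) * (h*g)⁻¹ = 1 := by rw [← hh]; group
    exact mul_inv_eq_one.mp h'
  · intro hh; rw [hh]; group

end helpers


lemma quotient_pow_p {H : Type*} [Group H] {p : ℕ} [hp : Fact (Nat.Prime p)]
    (h : IsPGroup p H) (htop : ∀ K : Subgroup H, K ≠ ⊥ → K = ⊤) (x : H) : x ^ p = 1 := by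
  by_contra hxp
  have h1 : Subgroup.zpowers (x ^ p) = ⊤ := by
    apply htop
    intro hbot
    exact hxp (by simpa [hbot] using Subgroup.mem_zpowers (x ^ p))
  have hx : x ∈ Subgroup.zpowers (x ^ p) := h1 ▸ Subgroup.mem_top x
  obtain ⟨m, hm⟩ := hx
  have hm' : (x ^ p) ^ m = x := hm
  have h2 : x ^ ((p : ℤ) * m - 1) = 1 := by
    rw [zpow_sub, zpow_mul, zpow_natCast, hm', zpow_one, mul_inv_cancel]
  have hdvd : (orderOf x : ℤ) ∣ (p : ℤ) * m - 1 :=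
    orderOf_dvd_iff_zpow_eq_one.mpr h2
  obtain ⟨k, hk⟩ := h x
  have hord : orderOf x ∣ p ^ k := orderOf_dvd_of_pow_eq_one hk
  obtain ⟨j, _, hje⟩ := (Nat.dvd_prime_pow hp.out).mp hord
  rcases Nat.eq_zero_or_pos j with hj0 | hj1
  · subst hj0
    simp only [pow_zero] at hje
    have : x = 1 := orderOf_eq_one_iff.mp hje
    subst this
    simp at hxp
  · have hpd : (p : ℤ) ∣ (p : ℤ) * m - 1 := by
      refine dvd_trans ?_ hdvd
      rw [hje]
      exact_mod_cast dvd_pow_self (p : ℤ) (by omega : j ≠ 0)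
    have h1' : (p : ℤ) ∣ 1 := by
      have := dvd_sub (Dvd.intro m rfl) hpd
      simpa using this
    have := Int.le_of_dvd one_pos h1'
    have := hp.out.two_le
    omega

lemma pow_p_mem_coatom {G : Type*} [Group G] [Finite G] {p : ℕ} [hp : Fact (Nat.Prime p)]
    (h : IsPGroup p G) {M : Subgroup G} (hM : IsCoatom M) (g : G) : g ^ p ∈ M := by
  haveI := h.isNilpotent
  haveI : M.Normal := Subgroup.NormalizerCondition.normal_of_coatom M normalizerCondition_of_isNilpotent hM
  have hq : IsPGroup p (G ⧸ M) := h.to_quotient M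
  rw [← QuotientGroup.eq_one_iff (g ^ p)]
  have htop : ∀ K : Subgroup (G ⧸ M), K ≠ ⊥ → K = ⊤ := by
    intro K hK
    obtain ⟨⟨x, hxK⟩, hx1⟩ := Subgroup.ne_bot_iff_exists_ne_one.mp hK
    have hx1' : x ≠ 1 := by simpa [Subgroup.mk_eq_one] using hx1
    have hcomap : M < K.comap (QuotientGroup.mk' M) := by
      refine lt_of_le_of_ne ?_ ?_
      · intro m hm
        have hm1 : (QuotientGroup.mk' M) m = 1 := (QuotientGroup.eq_one_iff m).mpr hm
        simp [Subgroup.mem_comap, hm1]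
      · intro heq
        obtain ⟨g', hg'⟩ := QuotientGroup.mk'_surjective M x
        have hg'K : g' ∈ K.comap (QuotientGroup.mk' M) := by
          simp [Subgroup.mem_comap, hg', hxK]
        rw [← heq] at hg'K
        exact hx1' (by rw [← hg']; exact (QuotientGroup.eq_one_iff g').mpr hg'K)
    have htop' := hM.2 _ hcomap
    have hsurj := QuotientGroup.mk'_surjective M
    calc K = (K.comap (QuotientGroup.mk' M)).map (QuotientGroup.mk' M) :=
            (Subgroup.map_comap_eq_self_of_surjective hsurj K).symm
      _ = ⊤ := by rw [htop', Subgroup.map_top_of_surjective _ hsurj]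
  have := quotient_pow_p hq htop (QuotientGroup.mk g)
  rw [← QuotientGroup.mk_pow] at this  -- maybe not exists; fallback
  exact this

lemma pow_p_mem_frattini {G : Type*} [Group G] [Finite G] {p : ℕ} [hp : Fact (Nat.Prime p)]
    (h : IsPGroup p G) (g : G) : g ^ p ∈ frattini G := by
  have : frattini G = ⨅ M ∈ {H : Subgroup G | IsCoatom H}, M := rfl
  rw [this]
  simp only [Subgroup.mem_iInf]
  intro M hM
  exact pow_p_mem_coatom h hM g


/-- Extraspecial `2`-group: a special `2`-group whose center has order `2`. -/
def IsExtraspecial2Group (G : Type*) [Group G] : Prop :=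
  IsSpecial2Group G ∧ Nat.card (Subgroup.center G) = 2

/-- A group is strongly real if every element is inverted by an involution. -/
def IsStronglyReal (G : Type*) [Group G] : Prop :=
  ∀ x : G, ∃ y : G, y * y = 1 ∧ y * x * y⁻¹ = x⁻¹

open scoped commutatorElement in
theorem extraspecial_stronglyReal (G : Type) [Group G] [Finite G]
    (hE : IsExtraspecial2Group G) (hQ : ¬ Nonempty (G ≃* QuaternionGroup 2)) :
    IsStronglyReal G := by
  obtain ⟨⟨hp2, _hnab, hcf, hfz, hΩ⟩, hcard⟩ := hE
  haveI : Fact (Nat.Prime 2) := ⟨Nat.prime_two⟩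
  have hsq : ∀ g : G, g * g ∈ Subgroup.center G := by
    intro g
    have h := pow_p_mem_frattini hp2 g
    rw [hfz] at h
    simpa [pow_two] using h
  have hcomm : ∀ g h : G, g*h*g⁻¹*h⁻¹ ∈ Subgroup.center G := by
    intro g h
    have h1 : ⁅g, h⁆ ∈ commutator G := by
      rw [commutator_def]
      exact Subgroup.commutator_mem_commutator (Subgroup.mem_top g) (Subgroup.mem_top h)
    rw [hcf, hfz] at h1
    simpa [commutatorElement_def, mul_assoc] using h1
  have hZsq : ∀ z ∈ Subgroup.center G, z * z = 1 := by
    intro z hz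
    rw [hΩ] at hz
    refine (Subgroup.closure_induction
      (p := fun x _ => x ∈ Subgroup.center G ∧ x * x = 1) ?_ ?_ ?_ ?_ hz).2
    · rintro x ⟨hxZ, hx2⟩
      exact ⟨hxZ, by simpa [pow_two] using hx2⟩
    · exact ⟨Subgroup.one_mem _, by simp⟩
    · rintro u v hu hv ⟨huZ, hu2⟩ ⟨hvZ, hv2⟩
      refine ⟨Subgroup.mul_mem _ huZ hvZ, ?_⟩
      calc (u*v)*(u*v) = u*(v*u)*v := by group
        _ = u*(u*v)*v := by rw [(Subgroup.mem_center_iff.mp huZ v)]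
        _ = (u*u)*(v*v) := by group
        _ = 1 := by rw [hu2, hv2, one_mul]
    · rintro u hu ⟨huZ, hu2⟩
      refine ⟨Subgroup.inv_mem _ huZ, ?_⟩
      rw [← mul_inv_rev, hu2, inv_one]
  obtain ⟨zz, hzz1, hzzu⟩ := (Nat.card_eq_two_iff' (1 : Subgroup.center G)).mp hcard
  set z : G := (zz : G) with hzdef
  have hzZ : z ∈ Subgroup.center G := zz.2
  have hz1 : z ≠ 1 := fun h => hzz1 (Subtype.ext h)
  have hz2 : z * z = 1 := hZsq z hzZ
  have hzinv : z⁻¹ = z := inv_eq_of_mul_eq_one_right hz2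
  have huniq : ∀ w ∈ Subgroup.center G, w = 1 ∨ w = z := by
    intro w hw
    by_cases h1 : w = 1
    · exact Or.inl h1
    · refine Or.inr ?_
      have h2 := hzzu ⟨w, hw⟩ (fun hh => h1 (by simpa using congrArg Subtype.val hh))
      exact congrArg Subtype.val h2
  have hzc : ∀ g : G, g * z = z * g := Subgroup.mem_center_iff.mp hzZ
  have hqd : ∀ g : G, g*g = 1 ∨ g*g = z := fun g => huniq _ (hsq g)
  have hcd : ∀ g h : G, g*h*g⁻¹*h⁻¹ = 1 ∨ g*h*g⁻¹*h⁻¹ = z := fun g h => huniq _ (hcomm g h)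
  have hcc : ∀ g h u : G, u * (g*h*g⁻¹*h⁻¹) = (g*h*g⁻¹*h⁻¹) * u := fun g h =>
    Subgroup.mem_center_iff.mp (hcomm g h)
  intro x
  by_cases hx2 : x * x = 1
  · refine ⟨x, hx2, ?_⟩
    have hxinv : x⁻¹ = x := (inv_eq_of_mul_eq_one_right hx2)
    rw [hxinv, hx2, one_mul]
  · have hxz : x * x = z := (hqd x).resolve_left hx2
    have hxinv : x⁻¹ = z * x := by rw [← hzinv, ← hxz]; group
    have hxc : x ∉ Subgroup.center G := fun h => hx2 (hZsq x h)
    obtain ⟨a, hax⟩ : ∃ a : G, ¬ (a * x = x * a) := by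
      by_contra h
      push_neg at h
      exact hxc (Subgroup.mem_center_iff.mpr h)
    have hcax : a*x*a⁻¹*x⁻¹ = z := by
      refine (hcd a x).resolve_left ?_
      intro h
      exact hax ((hc1_iff a x).mp h)
    by_contra hbad
    push_neg at hbad
    have hkey : ∀ g : G, g*x*g⁻¹*x⁻¹ = z → g*g = z := by
      intro g hg
      have hconj : g*x*g⁻¹ = x⁻¹ := by
        rw [hxinv]
        calc g*x*g⁻¹ = (g*x*g⁻¹*x⁻¹)*x := by group
          _ = z*x := by rw [hg]
      rcases hqd g with h1 | h1
      · exact absurd hconj (hbad g h1)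
      · exact h1
    have haa : a * a = z := hkey a hcax
    have hconj : a*x*a⁻¹ = x⁻¹ := by
      rw [hxinv]
      calc a*x*a⁻¹ = (a*x*a⁻¹*x⁻¹)*x := by group
        _ = z*x := by rw [hcax]
    have hqc : ∀ g : G, g*x = x*g → g*g = g*a*g⁻¹*a⁻¹ := by
      intro g hg
      have hgx1 : g*x*g⁻¹*x⁻¹ = 1 := (hc1_iff g x).mpr hg
      have h2 : (a*g)*x*(a*g)⁻¹*x⁻¹ = z := by
        rw [comm_bilin_left a g x (hcc g x), hgx1, mul_one, hcax]
      have h3 : (a*g)*(a*g) = z := hkey _ h2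
      have h4 := sq_mul a g (hcc g a)
      rw [h3, haa] at h4
      have h5 : (g*a*g⁻¹*a⁻¹) * (z*(g*g)) = z := h4.symm
      have hwinv : (g*a*g⁻¹*a⁻¹)⁻¹ = g*a*g⁻¹*a⁻¹ := by
        rcases hcd g a with hw | hw <;> rw [hw]
        · exact inv_one
        · exact hzinv
      have h6 : z*(g*g) = (g*a*g⁻¹*a⁻¹)⁻¹ * z := eq_inv_mul_iff_mul_eq.mpr h5
      have h7c : Commute z (g*a*g⁻¹*a⁻¹) := hcc g a z
      have h8 : z*(g*g) = z*(g*a*g⁻¹*a⁻¹)⁻¹ := h6.trans (h7c.inv_right.eq).symm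
      have h9 := mul_left_cancel h8
      rw [h9, hwinv]
    have habel : ∀ g h : G, g*x = x*g → h*x = x*h → h*g*h⁻¹*g⁻¹ = 1 := by
      intro g h hg hh
      have hgh : (g*h)*x = x*(g*h) := by
        rw [mul_assoc, hh, ← mul_assoc, hg, mul_assoc]
      have e1 : (g*h)*(g*h) = (g*h)*a*(g*h)⁻¹*a⁻¹ := hqc _ hgh
      have e2 : (g*h)*a*(g*h)⁻¹*a⁻¹ = (g*a*g⁻¹*a⁻¹)*(h*a*h⁻¹*a⁻¹) :=
        comm_bilin_left g h a (hcc h a)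
      have e3 : (g*h)*(g*h) = (h*g*h⁻¹*g⁻¹)*((g*g)*(h*h)) := sq_mul g h (hcc h g)
      rw [hqc g hg, hqc h hh] at e3
      have e5 : (h*g*h⁻¹*g⁻¹)*((g*a*g⁻¹*a⁻¹)*(h*a*h⁻¹*a⁻¹))
          = (g*a*g⁻¹*a⁻¹)*(h*a*h⁻¹*a⁻¹) := e3.symm.trans (e1.trans e2)
      have e4 : (h*g*h⁻¹*g⁻¹)*((g*a*g⁻¹*a⁻¹)*(h*a*h⁻¹*a⁻¹))
          = 1*((g*a*g⁻¹*a⁻¹)*(h*a*h⁻¹*a⁻¹)) := by rw [one_mul]; exact e5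
      exact mul_right_cancel e4
    -- c x a = z and c x⁻¹ a = z and c a⁻¹ x = z
    have hcxa : x*a*x⁻¹*a⁻¹ = z := by
      have h' : x*a*x⁻¹*a⁻¹ = (a*x*a⁻¹*x⁻¹)⁻¹ := by group
      rw [h', hcax, hzinv]
    have hcxinva : x⁻¹*a*(x⁻¹)⁻¹*a⁻¹ = z := by
      have e := comm_bilin_left x x⁻¹ a (hcc x⁻¹ a)
      simp only [mul_inv_cancel, one_mul, inv_one, mul_one] at e
      rw [hcxa] at e
      -- e : 1 = z * (x⁻¹*a*(x⁻¹)⁻¹*a⁻¹)  (hopefully)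
      have := inv_eq_of_mul_eq_one_right e.symm
      rw [hzinv] at this
      exact this.symm
    have hcainvx : a⁻¹*x*(a⁻¹)⁻¹*x⁻¹ = z := by
      have e := comm_bilin_left a a⁻¹ x (hcc a⁻¹ x)
      simp only [mul_inv_cancel, one_mul, inv_one, mul_one] at e
      rw [hcax] at e
      have := inv_eq_of_mul_eq_one_right e.symm
      rw [hzinv] at this
      exact this.symm
    have hsplit : ∀ g : G, g*x = x*g ∨ (a⁻¹*g)*x = x*(a⁻¹*g) := by
      intro g
      rcases hcd g x with h | h
      · exact Or.inl ((hc1_iff g x).mp h)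
      · refine Or.inr ((hc1_iff _ x).mp ?_)
        have e := comm_bilin_left a⁻¹ g x (hcc g x)
        rw [h, hcainvx] at e
        rw [e, hz2]
    have hcenter_of : ∀ g : G, g*x = x*g → g*a = a*g → (g = 1 ∨ g = z) := by
      intro g hg hga
      refine huniq g (Subgroup.mem_center_iff.mpr ?_)
      intro u
      rcases hsplit u with hu | hu
      · exact (hc1_iff u g).mp (habel g u hg hu)
      · calc u*g = a*((a⁻¹*u)*g) := by group
          _ = a*(g*(a⁻¹*u)) := by rw [(hc1_iff _ g).mp (habel g (a⁻¹*u) hg hu)]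
          _ = (a*g)*(a⁻¹*u) := by group
          _ = (g*a)*(a⁻¹*u) := by rw [← hga]
          _ = g*u := by group
    have hclass : ∀ g : G, g*x = x*g → g = 1 ∨ g = z ∨ g = x ∨ g = x*z := by
      intro g hg
      rcases hcd g a with h | h
      · rcases hcenter_of g hg ((hc1_iff g a).mp h) with h1 | h1
        · exact Or.inl h1
        · exact Or.inr (Or.inl h1)
      · have hvx : (x⁻¹*g)*x = x*(x⁻¹*g) := by
          calc (x⁻¹*g)*x = x⁻¹*(g*x) := by group
            _ = x⁻¹*(x*g) := by rw [hg]
            _ = x*(x⁻¹*g) := by group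
        have hva : (x⁻¹*g)*a = a*(x⁻¹*g) := by
          refine (hc1_iff _ a).mp ?_
          have e := comm_bilin_left x⁻¹ g a (hcc g a)
          rw [h, hcxinva] at e
          rw [e, hz2]
        rcases hcenter_of (x⁻¹*g) hvx hva with h1 | h1
        · refine Or.inr (Or.inr (Or.inl ?_))
          have := inv_mul_eq_one.mp h1
          exact this.symm
        · refine Or.inr (Or.inr (Or.inr ?_))
          calc g = x*(x⁻¹*g) := by group
            _ = x*z := by rw [h1]
    have hfull : ∀ g : G,
        g = 1 ∨ g = z ∨ g = x ∨ g = x*z ∨ g = a*1 ∨ g = a*z ∨ g = a*x ∨ g = a*(x*z) := by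
      intro g
      rcases hsplit g with hg | hg
      · rcases hclass g hg with h|h|h|h <;> tauto
      · have hgw : g = a * (a⁻¹*g) := by group
        rcases hclass _ hg with h|h|h|h
        · exact Or.inr (Or.inr (Or.inr (Or.inr (Or.inl (by rw [hgw, h])))))
        · exact Or.inr (Or.inr (Or.inr (Or.inr (Or.inr (Or.inl (by rw [hgw, h]))))))
        · exact Or.inr (Or.inr (Or.inr (Or.inr (Or.inr (Or.inr (Or.inl (by rw [hgw, h])))))))
        · exact Or.inr (Or.inr (Or.inr (Or.inr (Or.inr (Or.inr (Or.inr (by rw [hgw, h])))))))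
    -- build the isomorphism with Q8
    have hx4 : x^(4:ℕ) = 1 := by
      have h4 : x^(4:ℕ) = (x*x)*(x*x) := by
        rw [show (4:ℕ) = 2+2 from rfl, pow_add, pow_two]
      rw [h4, hxz, hz2]
    have hconjk : ∀ k : ℤ, a * x^k * a⁻¹ = x^(-k) := by
      intro k
      have h0 : (MulAut.conj a) x = x⁻¹ := by simpa [MulAut.conj_apply] using hconj
      calc a * x^k * a⁻¹ = (MulAut.conj a) (x^k) := rfl
        _ = ((MulAut.conj a) x)^k := map_zpow _ _ _
        _ = x^(-k) := by rw [h0, inv_zpow, ← zpow_neg]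
    have hswap : ∀ k : ℤ, x^k * a = a * x^(-k) := by
      intro k
      have h0 := hconjk (-k)
      rw [neg_neg] at h0
      rw [← h0]; group
    have horder : ∀ s t : ℤ, ((s : ZMod (2*2)) = (t : ZMod (2*2))) → x^s = x^t := by
      intro s t hst
      have hdvd : ((2*2 : ℕ) : ℤ) ∣ s - t := by
        have h' := (ZMod.intCast_eq_intCast_iff' s t (2*2)).mp hst
        exact Int.ModEq.dvd h'.symm
      obtain ⟨u, hu⟩ := hdvd
      have hx4' : x^((2*2 : ℕ) : ℤ) = 1 := by
        rw [zpow_natCast, show (2*2 : ℕ) = 4 from rfl]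
        exact hx4
      calc x^s = x^(t + ((2*2:ℕ):ℤ)*u) := by rw [show t + ((2*2:ℕ):ℤ)*u = s by omega]
        _ = x^t * (x^((2*2:ℕ):ℤ))^u := by rw [zpow_add, zpow_mul]
        _ = x^t := by rw [hx4', one_zpow, mul_one]
    have hval : ∀ i : ZMod (2*2), (((i.val : ℤ)) : ZMod (2*2)) = i := by
      intro i
      push_cast
      exact ZMod.natCast_rightInverse i
    let f : QuaternionGroup 2 → G := fun q => match q with
      | .a i => x ^ (i.val : ℤ)
      | .xa i => a * x ^ (i.val : ℤ)
    have hf_mul : ∀ p q : QuaternionGroup 2, f (p*q) = f p * f q := by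
      rintro (i|i) (j|j)
      · show x ^ (((i+j).val : ℤ)) = x ^ (i.val : ℤ) * x ^ (j.val : ℤ)
        rw [← zpow_add]
        refine horder _ _ ?_
        push_cast [hval]
        ring
      · show a * x ^ (((j-i).val : ℤ)) = x ^ (i.val : ℤ) * (a * x ^ (j.val : ℤ))
        have h1 : x ^ (i.val : ℤ) * (a * x ^ (j.val : ℤ)) = a * x^(-(i.val:ℤ) + (j.val:ℤ)) := by
          rw [← mul_assoc, hswap, mul_assoc, ← zpow_add]
        rw [h1]
        congr 1
        refine horder _ _ ?_
        push_cast [hval]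
        ring
      · show a * x ^ (((i+j).val : ℤ)) = (a * x ^ (i.val : ℤ)) * x ^ (j.val : ℤ)
        rw [mul_assoc, ← zpow_add]
        congr 1
        refine horder _ _ ?_
        push_cast [hval]
        ring
      · show x ^ ((((2:ℕ) + j - i).val : ℤ)) = (a * x ^ (i.val : ℤ)) * (a * x ^ (j.val : ℤ))
        have h1 : (a * x ^ (i.val : ℤ)) * (a * x ^ (j.val : ℤ))
            = (a*a) * x^(-(i.val:ℤ) + (j.val:ℤ)) := by
          rw [mul_assoc, ← mul_assoc (x ^ (i.val : ℤ)), hswap, mul_assoc, ← zpow_add,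
            ← mul_assoc]
        have h2 : z = x^(2:ℤ) := by
          rw [← hxz, show (2:ℤ) = 1+1 from rfl, zpow_add, zpow_one]
        rw [h1, haa, h2, ← zpow_add]
        refine horder _ _ ?_
        push_cast [hval]
        ring
    let F : QuaternionGroup 2 →* G := MonoidHom.mk' f hf_mul
    have hx3 : x^(3:ℤ) = z*x := by
      have h3' : x^(3:ℤ) = (x*x)*x := by
        rw [show (3:ℤ) = 1+1+1 from rfl, zpow_add, zpow_add, zpow_one]
      rw [h3', hxz]
    have hinj : Function.Injective F := by
      refine (injective_iff_map_eq_one F).mpr ?_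
      rintro (i|i) hFi
      · have hval4 : i.val < 2*2 := i.val_lt
        have hF : x ^ (i.val : ℤ) = 1 := hFi
        have hi0 : i.val = 0 := by
          by_contra hi0
          rcases (by omega : i.val = 1 ∨ i.val = 2 ∨ i.val = 3) with h|h|h
          · rw [h] at hF
            simp only [Nat.cast_one, zpow_one] at hF
            exact hx2 (by rw [hF]; simp)
          · rw [h] at hF
            rw [show ((2:ℕ):ℤ) = 1+1 from rfl, zpow_add, zpow_one] at hF
            exact hx2 hF
          · rw [h] at hF
            rw [show ((3:ℕ):ℤ) = (3:ℤ) by norm_num, hx3] at hF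
            -- z*x = 1 → x = z⁻¹ = z → x*x = z*z = 1
            have hxe : x = z := by
              have := inv_eq_of_mul_eq_one_right hF
              rw [← this, hzinv]
            exact hx2 (by rw [hxe, hz2])
        have hiz : i = 0 := (ZMod.val_eq_zero i).mp hi0
        rw [hiz]
        rfl
      · exfalso
        have hF : a * x ^ (i.val : ℤ) = 1 := hFi
        have ha' : a = (x ^ (i.val : ℤ))⁻¹ := by
          rw [eq_inv_iff_mul_eq_one]
          exact hF
        apply hax
        rw [ha', ← zpow_neg]
        calc x ^ (-(i.val:ℤ)) * x = x ^ (-(i.val:ℤ) + 1) := by rw [← zpow_add_one]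
          _ = x ^ (1 + -(i.val:ℤ)) := by ring_nf
          _ = x * x ^ (-(i.val:ℤ)) := by rw [zpow_add, zpow_one]
    have hv0 : (((0 : ZMod (2*2)).val : ℤ)) = 0 := by decide
    have hv1 : (((1 : ZMod (2*2)).val : ℤ)) = 1 := by decide
    have hv2 : (((2 : ZMod (2*2)).val : ℤ)) = 2 := by decide
    have hv3 : (((3 : ZMod (2*2)).val : ℤ)) = 3 := by decide
    have hsurj : Function.Surjective F := by
      intro g
      rcases hfull g with h|h|h|h|h|h|h|h
      · exact ⟨.a 0, by show x ^ (((0 : ZMod (2*2)).val : ℤ)) = g; rw [hv0, h]; simp⟩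
      · refine ⟨.a 2, ?_⟩
        show x ^ (((2 : ZMod (2*2)).val : ℤ)) = g
        rw [hv2, h]
        rw [show (2:ℤ) = 1+1 by norm_num, zpow_add, zpow_one, ← hxz]
      · refine ⟨.a 1, ?_⟩
        show x ^ (((1 : ZMod (2*2)).val : ℤ)) = g
        rw [hv1, h, zpow_one]
      · refine ⟨.a 3, ?_⟩
        show x ^ (((3 : ZMod (2*2)).val : ℤ)) = g
        rw [hv3, h, hx3, hzc]
      · refine ⟨.xa 0, ?_⟩
        show a * x ^ (((0 : ZMod (2*2)).val : ℤ)) = g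
        rw [hv0, h]
        simp
      · refine ⟨.xa 2, ?_⟩
        show a * x ^ (((2 : ZMod (2*2)).val : ℤ)) = g
        rw [hv2, h]
        congr 1
        rw [show (2:ℤ) = 1+1 by norm_num, zpow_add, zpow_one, ← hxz]
      · refine ⟨.xa 1, ?_⟩
        show a * x ^ (((1 : ZMod (2*2)).val : ℤ)) = g
        rw [hv1, h, zpow_one]
      · refine ⟨.xa 3, ?_⟩
        show a * x ^ (((3 : ZMod (2*2)).val : ℤ)) = g
        rw [hv3, h, hx3, hzc]
    exact absurd ⟨(MulEquiv.ofBijective F ⟨hinj, hsurj⟩).symm⟩ hQ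



theorem quot_part (N : Subgroup (QuaternionGroup 2 × DihedralGroup 4)) (hN : N.Normal)
    (hcar : (N : Set (QuaternionGroup 2 × DihedralGroup 4)) =
      {p | p.1 ∈ Subgroup.center (QuaternionGroup 2) ∧
           p.2 ∈ Subgroup.center (DihedralGroup 4) ∧ (p.1 = 1 ↔ p.2 = 1)}) :
    IsStronglyReal ((QuaternionGroup 2 × DihedralGroup 4) ⧸ N) := by
  haveI := hN
  have hmem : ∀ p : QuaternionGroup 2 × DihedralGroup 4, p ∈ N ↔
      ((∀ g, g * p.1 = p.1 * g) ∧ (∀ g, g * p.2 = p.2 * g) ∧ (p.1 = 1 ↔ p.2 = 1)) := by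
    intro p
    rw [← SetLike.mem_coe, hcar]
    simp [Subgroup.mem_center_iff]
  have key : ∀ p : QuaternionGroup 2 × DihedralGroup 4, ∃ y : QuaternionGroup 2 × DihedralGroup 4,
      (((∀ g, g * (y*y).1 = (y*y).1 * g) ∧ (∀ g, g * (y*y).2 = (y*y).2 * g) ∧ ((y*y).1 = 1 ↔ (y*y).2 = 1))) ∧
      ((∀ g, g * ((y*p*y⁻¹)⁻¹ * p⁻¹).1 = ((y*p*y⁻¹)⁻¹ * p⁻¹).1 * g) ∧
       (∀ g, g * ((y*p*y⁻¹)⁻¹ * p⁻¹).2 = ((y*p*y⁻¹)⁻¹ * p⁻¹).2 * g) ∧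
       (((y*p*y⁻¹)⁻¹ * p⁻¹).1 = 1 ↔ ((y*p*y⁻¹)⁻¹ * p⁻¹).2 = 1)) := by decide
  intro x
  induction x using QuotientGroup.induction_on with
  | H p =>
    obtain ⟨y, h1, h2⟩ := key p
    refine ⟨QuotientGroup.mk y, ?_, ?_⟩
    · rw [← QuotientGroup.mk_mul, QuotientGroup.eq_one_iff]
      exact (hmem _).mpr h1
    · show QuotientGroup.mk (y*p*y⁻¹) = QuotientGroup.mk p⁻¹
      rw [QuotientGroup.eq]
      exact (hmem _).mpr h2


/-- Every extraspecial `2`-group other than `Q₈` is strongly real; in particular `D₄`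
and the central product `Q₈ ∘ D₄` are strongly real, while `Q₈` itself is not. -/
theorem extraspecial2Group_stronglyReal
    (N : Subgroup (QuaternionGroup 2 × DihedralGroup 4)) (hN : N.Normal)
    (hcar : (N : Set (QuaternionGroup 2 × DihedralGroup 4)) =
      {p | p.1 ∈ Subgroup.center (QuaternionGroup 2) ∧
           p.2 ∈ Subgroup.center (DihedralGroup 4) ∧ (p.1 = 1 ↔ p.2 = 1)}) :
    (∀ (G : Type) [Group G] [Finite G], IsExtraspecial2Group G →
      ¬ Nonempty (G ≃* QuaternionGroup 2) → IsStronglyReal G) ∧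
    IsStronglyReal (DihedralGroup 4) ∧
    IsStronglyReal ((QuaternionGroup 2 × DihedralGroup 4) ⧸ N) ∧
    ¬ IsStronglyReal (QuaternionGroup 2) := by
  refine ⟨fun G _ _ hE hQ => extraspecial_stronglyReal G hE hQ, ?_, quot_part N hN hcar, ?_⟩
  · unfold IsStronglyReal
    decide
  · unfold IsStronglyReal
    decide
end
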